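/- Let A and B be groups and H a group embedding into both A and B. Then Tor₁(A *_H B) equals the normal closure in A *_H B of Tor(A) ∪ Tor(B), where Tor(A) and Tor(B) are the torsion elements of A and B viewed inside the amalgamated free product. -/

import Mathlib

open Monoid

universe u

/-- The family `{A, B}` indexed by `Bool` (`true ↦ A`, `false ↦ B`). -/
instance famGroup (A B : Type u) [Group A] [Group B] : ∀ b : Bool, Group (cond b A B)
  | true => ‹Group A›
  | false => ‹Group B›

/-- The pair of embeddings `H →* A`, `H →* B` as a `Bool`-indexed family. -/
def amalgMaps {A B H : Type u} [Group A] [Group B] [Group H]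
    (φA : H →* A) (φB : H →* B) : ∀ b : Bool, H →* cond b A B
  | true => φA
  | false => φB

namespace TorAmalg

open Monoid PushoutI Monoid.CoprodI

variable {ι : Type*} {H : Type*} [Group H] {G : ι → Type*} [∀ i, Group (G i)]
  {φ : ∀ i, H →* G i}

/-- The product of a list of letters in the pushout. -/
def listProd (φ : ∀ i, H →* G i) (l : List (Σ i, G i)) : PushoutI φ :=
  (l.map fun p => PushoutI.of (φ := φ) p.1 p.2).prod

/-- A list of letters is good if no letter is in the image of the base group and no two
adjacent letters are in the same factor. -/
def Good (φ : ∀ i, H →* G i) (l : List (Σ i, G i)) : Prop :=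
  (∀ p ∈ l, p.2 ∉ (φ p.1).range) ∧ (l.map Sigma.fst).Chain' Ne

theorem listProd_nil : listProd φ [] = 1 := rfl

theorem listProd_cons (p : Σ i, G i) (l : List (Σ i, G i)) :
    listProd φ (p :: l) = PushoutI.of (φ := φ) p.1 p.2 * listProd φ l := by
  simp [listProd]

theorem listProd_append (l₁ l₂ : List (Σ i, G i)) :
    listProd φ (l₁ ++ l₂) = listProd φ l₁ * listProd φ l₂ := by
  simp [listProd]

theorem listProd_singleton (p : Σ i, G i) :
    listProd φ [p] = PushoutI.of (φ := φ) p.1 p.2 := by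
  simp [listProd]

theorem Good.letters_ne_one {l : List (Σ i, G i)} (hl : Good φ l) :
    ∀ p ∈ l, p.2 ≠ 1 := fun p hp h1 =>
  hl.1 p hp (h1 ▸ one_mem _)

/-- The word associated to a good list. -/
def Good.word {l : List (Σ i, G i)} (hl : Good φ l) : CoprodI.Word G :=
  ⟨l, hl.letters_ne_one, (List.isChain_map Sigma.fst).1 hl.2⟩

theorem ofCoprodI_listProd (l : List (Σ i, G i)) :
    ofCoprodI ((l.map fun p => (CoprodI.of p.2 : CoprodI G)).prod) = listProd φ l := by
  rw [map_list_prod, List.map_map, listProd]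
  rfl

theorem word_prod_eq {l : List (Σ i, G i)} (hl : Good φ l) :
    ofCoprodI hl.word.prod = listProd φ l :=
  ofCoprodI_listProd l

theorem listProd_ne_one (hφ : ∀ i, Function.Injective (φ i)) {l : List (Σ i, G i)}
    (hl : Good φ l) (hne : l ≠ []) : listProd φ l ≠ 1 := by
  intro h
  have hred : PushoutI.Reduced φ hl.word := fun g hg => hl.1 g hg
  have hmem : ofCoprodI hl.word.prod ∈ (PushoutI.base φ).range := by
    rw [word_prod_eq hl, h]; exact one_mem _
  have := hred.eq_empty_of_mem_range hφ hmem
  exact hne (congrArg Word.toList this)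

theorem chain'_flatten_replicate {α : Type*} {R : α → α → Prop} {lf : List α}
    (hc : lf.Chain' R) (hqp : ∀ x ∈ lf.getLast?, ∀ y ∈ lf.head?, R x y) (k : ℕ) :
    ((List.replicate k lf).flatten).Chain' R := by
  induction k with
  | zero => simp [List.Chain']
  | succ n ih =>
    rw [List.replicate_succ, List.flatten_cons, List.Chain', List.isChain_append]
    refine ⟨hc, ih, ?_⟩
    intro x hx y hy
    apply hqp x hx
    cases n with
    | zero => simp at hy
    | succ m =>
      rw [List.replicate_succ, List.flatten_cons] at hy
      rcases lf with _ | ⟨a, lf'⟩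
      · simp at hx
      · simpa using hy

theorem listProd_flatten_replicate (k : ℕ) (l : List (Σ i, G i)) :
    listProd φ ((List.replicate k l).flatten) = (listProd φ l) ^ k := by
  simp [listProd, List.map_flatten, List.map_replicate, List.prod_flatten, List.prod_replicate]

theorem not_isOfFinOrder_of_good (hφ : ∀ i, Function.Injective (φ i))
    {l : List (Σ i, G i)} {p q : Σ i, G i} (hl : Good φ l)
    (hhead : l.head? = some p) (hlast : l.getLast? = some q) (hpq : p.1 ≠ q.1) :
    ¬ IsOfFinOrder (listProd φ l) := by
  intro hfin
  obtain ⟨n, hn, hpow⟩ := isOfFinOrder_iff_pow_eq_one.1 hfin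
  have hlne : l ≠ [] := by rintro rfl; simp at hhead
  have hgood : Good φ ((List.replicate n l).flatten) := by
    constructor
    · intro r hr
      rw [List.mem_flatten] at hr
      obtain ⟨l', hl', hrl'⟩ := hr
      rw [List.mem_replicate] at hl'
      exact hl.1 r (hl'.2 ▸ hrl')
    · rw [List.map_flatten, List.map_replicate]
      refine chain'_flatten_replicate hl.2 ?_ n
      intro x hx y hy
      rw [List.getLast?_map, hlast] at hx
      rw [List.head?_map, hhead] at hy
      simp only [Option.map_some, Option.mem_def, Option.some.injEq] at hx hy
      rw [← hx, ← hy]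
      exact hpq.symm
  have hne : (List.replicate n l).flatten ≠ [] := by
    cases n with
    | zero => omega
    | succ m =>
      rw [List.replicate_succ, List.flatten_cons]
      simp [hlne]
  exact listProd_ne_one hφ hgood hne (by rw [listProd_flatten_replicate]; exact hpow)

theorem isOfFinOrder_of_conj {K : Type*} [Group K] {x c : K}
    (h : IsOfFinOrder (x * c * x⁻¹)) : IsOfFinOrder c := by
  obtain ⟨n, hn, hp⟩ := isOfFinOrder_iff_pow_eq_one.1 h
  refine isOfFinOrder_iff_pow_eq_one.2 ⟨n, hn, ?_⟩
  rw [conj_pow] at hp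
  have := congrArg (fun z => x⁻¹ * z * x) hp
  simpa [mul_assoc] using this

theorem isOfFinOrder_of_of (hφ : ∀ i, Function.Injective (φ i)) {i : ι} {g : G i}
    (h : IsOfFinOrder (PushoutI.of (φ := φ) i g)) : IsOfFinOrder g := by
  rw [← orderOf_pos_iff] at h ⊢
  rwa [orderOf_injective _ (PushoutI.of_injective hφ i)] at h

theorem key (hφ : ∀ i, Function.Injective (φ i)) :
    ∀ (n : ℕ) (l : List (Σ i, G i)), l ≠ [] → l.length ≤ n → Good φ l →
      IsOfFinOrder (listProd φ l) →
      ∃ (i : ι) (g : G i) (x : PushoutI φ), IsOfFinOrder g ∧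
        listProd φ l = x * PushoutI.of (φ := φ) i g * x⁻¹ := by
  intro n
  induction n with
  | zero =>
    intro l hne hlen
    exact absurd (List.length_eq_zero_iff.1 (Nat.le_zero.1 hlen)) hne
  | succ n ih =>
    intro l hne hlen hgood hfin
    rcases l with _ | ⟨p, t⟩
    · exact absurd rfl hne
    rcases t.eq_nil_or_concat with rfl | ⟨m, q, rfl⟩
    · -- singleton
      refine ⟨p.1, p.2, 1, ?_, by simp [listProd_singleton]⟩
      rw [listProd_singleton] at hfin
      exact isOfFinOrder_of_of hφ hfin
    simp only [List.concat_eq_append] at hlen hgood hfin ⊢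
    by_cases hpq : p.1 = q.1
    · obtain ⟨i, gp⟩ := p
      obtain ⟨j, gq⟩ := q
      dsimp only at hpq
      subst hpq
      have hconj : listProd φ (⟨i, gp⟩ :: (m ++ [⟨i, gq⟩])) =
          PushoutI.of (φ := φ) i gp * (listProd φ m * PushoutI.of (φ := φ) i (gq * gp)) *
            (PushoutI.of (φ := φ) i gp)⁻¹ := by
        rw [listProd_cons, listProd_append, listProd_singleton, map_mul]
        group
      have hfinc : IsOfFinOrder (listProd φ m * PushoutI.of (φ := φ) i (gq * gp)) :=
        isOfFinOrder_of_conj (hconj ▸ hfin)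
      have hchain_tail : ((m ++ [(⟨i, gq⟩ : Σ i, G i)]).map Sigma.fst).Chain' Ne := by
        have h2 := hgood.2
        rw [List.map_cons] at h2
        exact h2.tail
      rcases m.eq_nil_or_concat with rfl | ⟨m', r, rfl⟩
      · -- c = of i (gq * gp)
        rw [listProd_nil, one_mul] at hfinc hconj
        exact ⟨i, gq * gp, PushoutI.of (φ := φ) i gp, isOfFinOrder_of_of hφ hfinc, hconj⟩
      simp only [List.concat_eq_append] at hlen hgood hfinc hconj hchain_tail ⊢
      by_cases hrange : gq * gp ∈ (φ i).range
      · obtain ⟨h, hh⟩ := hrange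
        set l' : List (Σ i, G i) := m' ++ [⟨r.1, r.2 * φ r.1 h⟩] with hl'
        have hbase : PushoutI.of (φ := φ) i (gq * gp) = PushoutI.base φ h := by
          rw [← hh, PushoutI.of_apply_eq_base]
        have hbase' : PushoutI.of (φ := φ) r.1 (r.2 * φ r.1 h) =
            PushoutI.of (φ := φ) r.1 r.2 * PushoutI.base φ h := by
          rw [map_mul, PushoutI.of_apply_eq_base]
        have hc : listProd φ (m' ++ [r]) * PushoutI.of (φ := φ) i (gq * gp) =
            listProd φ l' := by
          rw [hl', listProd_append, listProd_append, listProd_singleton, listProd_singleton,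
            hbase, hbase', mul_assoc]
        have hgood' : Good φ l' := by
          constructor
          · intro s hs
            rw [hl', List.mem_append, List.mem_singleton] at hs
            rcases hs with hs | rfl
            · exact hgood.1 s (by simp [hs])
            · dsimp only
              rw [(MonoidHom.range (φ r.1)).mul_mem_cancel_right ⟨h, rfl⟩]
              exact hgood.1 r (by simp)
          · have hmap : l'.map Sigma.fst = (m' ++ [r]).map Sigma.fst := by simp [hl']
            rw [hmap]
            rw [List.map_append (l₁ := m' ++ [r])] at hchain_tail
            exact (List.isChain_append.1 hchain_tail).1
        have hlen' : l'.length ≤ n := by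
          simp only [hl', List.length_append, List.length_cons, List.length_singleton] at hlen ⊢
          omega
        have hne' : l' ≠ [] := by simp [hl']
        obtain ⟨i', g', x', hfin', heq⟩ := ih l' hne' hlen' hgood' (hc ▸ hfinc)
        refine ⟨i', g', PushoutI.of (φ := φ) i gp * x', hfin', ?_⟩
        rw [hconj, hc, heq]
        group
      · set l' : List (Σ i, G i) := (m' ++ [r]) ++ [⟨i, gq * gp⟩] with hl'
        have hc : listProd φ (m' ++ [r]) * PushoutI.of (φ := φ) i (gq * gp) =
            listProd φ l' := by
          simp [hl', listProd_append, listProd_singleton, listProd_cons, listProd_nil,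
            map_mul, mul_assoc]
        have hgood' : Good φ l' := by
          constructor
          · intro s hs
            rw [hl'] at hs
            simp only [List.append_assoc, List.mem_append, List.mem_singleton] at hs
            rcases hs with hs | hs | rfl
            · exact hgood.1 s (by simp [hs])
            · subst hs
              exact hgood.1 s (by simp)
            · exact hrange
          · have hmap : l'.map Sigma.fst =
                ((m' ++ [r]) ++ [(⟨i, gq⟩ : Σ i, G i)]).map Sigma.fst := by
              simp [hl']
            rw [hmap]
            exact hchain_tail
        have hlen' : l'.length ≤ n := by
          simp only [hl', List.length_append, List.length_cons, List.length_singleton] at hlen ⊢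
          omega
        have hne' : l' ≠ [] := by simp [hl']
        obtain ⟨i', g', x', hfin', heq⟩ := ih l' hne' hlen' hgood' (hc ▸ hfinc)
        refine ⟨i', g', PushoutI.of (φ := φ) i gp * x', hfin', ?_⟩
        rw [hconj, hc, heq]
        group
    · exfalso
      refine not_isOfFinOrder_of_good hφ hgood rfl ?_ hpq hfin
      rw [show p :: (m ++ [q]) = (p :: m) ++ [q] from rfl, List.getLast?_concat]

theorem not_in_range_of_mem_set (d : NormalWord.Transversal φ) {i : ι} {g : G i}
    (hg : g ∈ d.set i) (hg1 : g ≠ 1) : g ∉ (φ i).range := by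
  rintro ⟨h, rfl⟩
  have hbij := (d.compl i).1
  have hmem1 : (φ i h : G i) ∈ ((φ i).range : Subgroup (G i)) := ⟨h, rfl⟩
  have := hbij (a₁ := (⟨⟨φ i h, hmem1⟩, ⟨1, d.one_mem i⟩⟩ :
      ((φ i).range : Set (G i)) × (d.set i)))
    (a₂ := ⟨⟨1, one_mem _⟩, ⟨φ i h, hg⟩⟩) (by simp)
  apply hg1
  have := congrArg (fun p => (p.2 : G i)) this
  simpa using this.symm

theorem conj_factor_of_isOfFinOrder (hφ : ∀ i, Function.Injective (φ i)) [Nonempty ι]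
    {g : PushoutI φ} (hg : IsOfFinOrder g) :
    ∃ (i : ι) (gi : G i) (x : PushoutI φ), IsOfFinOrder gi ∧
      g = x * PushoutI.of (φ := φ) i gi * x⁻¹ := by
  classical
  obtain ⟨d⟩ := NormalWord.transversal_nonempty φ hφ
  set w : NormalWord d := NormalWord.equiv g with hw
  have hgw : g = w.prod := (NormalWord.equiv.symm_apply_apply g).symm
  have hprod : w.prod = PushoutI.base φ w.head * ofCoprodI w.toWord.prod := rfl
  rcases hl : w.toList with _ | ⟨p, t⟩
  · have hg1 : g = PushoutI.of (φ := φ) (Classical.arbitrary ι) (φ _ w.head) := by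
      rw [PushoutI.of_apply_eq_base, hgw, hprod]
      have : w.toWord.prod = 1 := by
        simp only [Word.prod, hl]; simp
      rw [this]; simp
    exact ⟨_, _, 1, isOfFinOrder_of_of hφ (hg1 ▸ hg), by simpa using hg1⟩
  · set l₀ : List (Σ i, G i) := ⟨p.1, φ p.1 w.head * p.2⟩ :: t with hl₀
    have hdecomp : g = listProd φ l₀ := by
      have ht : ofCoprodI w.toWord.prod =
          PushoutI.of (φ := φ) p.1 p.2 * listProd φ t := by
        simp only [Word.prod, hl, List.map_cons, List.prod_cons, map_mul,
          PushoutI.ofCoprodI_of, ofCoprodI_listProd]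
      rw [hgw, hprod, ht, hl₀, listProd_cons]
      dsimp only
      rw [map_mul, PushoutI.of_apply_eq_base, mul_assoc]
    have hmeml : ∀ s : Σ i, G i, s ∈ w.toList → s.2 ∉ (φ s.1).range := by
      intro s hs
      exact not_in_range_of_mem_set d (w.normalized s.1 s.2 hs) (w.toWord.ne_one s hs)
    have hgood : Good φ l₀ := by
      constructor
      · intro s hs
        rw [hl₀, List.mem_cons] at hs
        rcases hs with rfl | hs
        · dsimp only
          intro hmem
          rw [(MonoidHom.range (φ p.1)).mul_mem_cancel_left ⟨w.head, rfl⟩] at hmem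
          exact hmeml p (hl ▸ List.mem_cons_self (a := p) (l := t)) hmem
        · exact hmeml s (hl ▸ List.mem_cons_of_mem p hs)
      · have hmap : l₀.map Sigma.fst = w.toList.map Sigma.fst := by
          rw [hl₀, hl]; rfl
        rw [hmap]
        exact (List.isChain_map Sigma.fst).2 (w.toWord.chain_ne.imp (fun a b => id))
    obtain ⟨i, gi, x, hfin, heq⟩ := key hφ l₀.length l₀ (by simp [hl₀]) le_rfl hgood
      (hdecomp ▸ hg)
    exact ⟨i, gi, x, hfin, hdecomp.trans heq⟩

end TorAmalg

theorem tor_one_amalgamated_product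
    (A B H : Type u) [Group A] [Group B] [Group H]
    (φA : H →* A) (φB : H →* B)
    (hA : Function.Injective φA) (hB : Function.Injective φB) :
    Subgroup.normalClosure
        {g : PushoutI (amalgMaps φA φB) | IsOfFinOrder g} =
      Subgroup.normalClosure
        ((PushoutI.of (φ := amalgMaps φA φB) true '' {a : A | IsOfFinOrder a}) ∪
          (PushoutI.of (φ := amalgMaps φA φB) false '' {b : B | IsOfFinOrder b})) := by
  have hφ : ∀ b : Bool, Function.Injective (amalgMaps φA φB b) := by
    intro b
    cases b
    · exact hB
    · exact hA
  apply le_antisymm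
  · apply Subgroup.normalClosure_le_normal
    intro g hg
    obtain ⟨i, gi, x, hfin, rfl⟩ := TorAmalg.conj_factor_of_isOfFinOrder hφ hg
    have hmem : PushoutI.of (φ := amalgMaps φA φB) i gi ∈
        Subgroup.normalClosure
          ((PushoutI.of (φ := amalgMaps φA φB) true '' {a : A | IsOfFinOrder a}) ∪
            (PushoutI.of (φ := amalgMaps φA φB) false '' {b : B | IsOfFinOrder b})) := by
      apply Subgroup.subset_normalClosure
      cases i
      · exact Or.inr ⟨gi, hfin, rfl⟩
      · exact Or.inl ⟨gi, hfin, rfl⟩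
    exact Subgroup.Normal.conj_mem (Subgroup.normalClosure_normal) _ hmem x
  · apply Subgroup.normalClosure_le_normal
    rintro g (⟨a, ha, rfl⟩ | ⟨b, hb, rfl⟩) <;>
      exact Subgroup.subset_normalClosure (MonoidHom.isOfFinOrder _ ‹_›)
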